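/- Let S₁,...,S_k ⊆ U be subsets of a finite set U of size n, and encode each S_i as the pair (|S_i|, b(S_i)) where b(S_i) = Σ_{u∈S_i} 2^{ι(u)} for an injection ι : U → {0,...,n−1}. Then Σ_i |S_i| = n and Σ_i b(S_i) = 2^n − 1 hold if and only if S₁,...,S_k is a partition of U (pairwise disjoint with union U). -/

import Mathlib

open Finset

private lemma sum_two_pow (n : ℕ) : (∑ j ∈ range n, 2 ^ j) = 2 ^ n - 1 := by
  induction n with
  | zero => simp
  | succ m ih =>
    rw [Finset.sum_range_succ, ih]
    have : (1:ℕ) ≤ 2 ^ m := Nat.one_le_two_pow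
    rw [pow_succ]; omega

private lemma key_lemma : ∀ (n : ℕ) (c : ℕ → ℕ),
    (∑ j ∈ range n, c j * 2 ^ j) = 2 ^ n - 1 →
    n ≤ (∑ j ∈ range n, c j) ∧
      ((∑ j ∈ range n, c j) = n → ∀ j < n, c j = 1) := by
  intro n
  induction n with
  | zero => intro c _; simp
  | succ n ih =>
    intro c h
    have hpow : (1:ℕ) ≤ 2 ^ n := Nat.one_le_two_pow
    rw [Finset.sum_range_succ'] at h
    set T := ∑ j ∈ range n, c (j + 1) * 2 ^ j with hT
    have h2 : 2 * T + c 0 + 1 = 2 * 2 ^ n := by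
      have he : (∑ j ∈ range n, c (j + 1) * 2 ^ (j + 1)) = 2 * T := by
        rw [hT, Finset.mul_sum]
        exact Finset.sum_congr rfl fun j _ => by ring
      rw [he, pow_succ] at h
      have : (0:ℕ) < 2 ^ n * 2 := by positivity
      omega
    set q := c 0 / 2 with hq
    have hc0 : c 0 = 2 * q + 1 := by omega
    have hqT : q + T = 2 ^ n - 1 := by omega
    set d : ℕ → ℕ := fun j => if j = 0 then q + c 1 else c (j + 1) with hd
    have hdval : ∀ j, d j * 2 ^ j = c (j + 1) * 2 ^ j + (if j = 0 then q else 0) := by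
      intro j
      by_cases hj : j = 0
      · subst hj; simp [hd]; ring
      · simp [hd, hj]
    have hdsum2 : ∀ j, d j = c (j + 1) + (if j = 0 then q else 0) := by
      intro j
      by_cases hj : j = 0
      · subst hj; simp [hd]; ring
      · simp [hd, hj]
    rcases Nat.eq_zero_or_pos n with h0 | hpos
    · subst h0
      constructor
      · simp
        omega
      · intro hsum j hj
        interval_cases j
        simp at hsum
        omega
    · have h0mem : (0 : ℕ) ∈ range n := Finset.mem_range.mpr hpos
      have hdpow : (∑ j ∈ range n, d j * 2 ^ j) = T + q := by
        rw [Finset.sum_congr rfl fun j _ => hdval j, Finset.sum_add_distrib,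
          Finset.sum_ite_eq' (range n) 0 (fun _ => q)]
        simp [h0mem, hT]
      have hdsum : (∑ j ∈ range n, d j) = (∑ j ∈ range n, c (j + 1)) + q := by
        rw [Finset.sum_congr rfl fun j _ => hdsum2 j, Finset.sum_add_distrib,
          Finset.sum_ite_eq' (range n) 0 (fun _ => q)]
        simp [h0mem]
      have hih := ih d (by rw [hdpow]; omega)
      have hctot : (∑ j ∈ range (n + 1), c j) = (∑ j ∈ range n, c (j + 1)) + c 0 :=
        Finset.sum_range_succ' c n
      constructor
      · omega
      · intro hsum j hj
        have hq0 : q = 0 := by omega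
        have hall : ∀ j < n, d j = 1 := hih.2 (by omega)
        rcases Nat.eq_zero_or_pos j with hj0 | hjpos
        · subst hj0; omega
        · obtain ⟨j', rfl⟩ := Nat.exists_eq_succ_of_ne_zero (Nat.pos_iff_ne_zero.mp hjpos)
          have := hall j' (by omega)
          rcases Nat.eq_zero_or_pos j' with hj'0 | hj'pos
          · subst hj'0; simpa [hd, hq0] using this
          · simpa [hd, Nat.pos_iff_ne_zero.mp hj'pos] using this

/-- Encoding subsets of an n-element set U via an injection ι : U → {0,…,n−1}:
Σ|Sᵢ| = n and Σ b(Sᵢ) = 2ⁿ − 1 hold iff S₁,…,S_k is a partition of U. -/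
theorem subset_encoding_partition {α : Type*} [DecidableEq α]
    (U : Finset α) (n k : ℕ) (hU : U.card = n)
    (ι : α → ℕ) (hιlt : ∀ u ∈ U, ι u < n)
    (hιinj : ∀ u ∈ U, ∀ v ∈ U, ι u = ι v → u = v)
    (S : Fin k → Finset α) (hsub : ∀ i, S i ⊆ U) :
    ((∑ i, (S i).card = n) ∧ (∑ i, ∑ u ∈ S i, 2 ^ ι u = 2 ^ n - 1)) ↔
      ((∀ i j, i ≠ j → Disjoint (S i) (S j)) ∧ Finset.univ.biUnion S = U) := by
  classical
  set c : α → ℕ := fun u => (Finset.univ.filter (fun i => u ∈ S i)).card with hc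
  have hfilter : ∀ i, U.filter (· ∈ S i) = S i := by
    intro i
    ext u
    simp only [Finset.mem_filter]
    exact ⟨fun h => h.2, fun h => ⟨hsub i h, h⟩⟩
  have htrans : ∀ f : α → ℕ, (∑ i, ∑ u ∈ S i, f u) = ∑ u ∈ U, c u * f u := by
    intro f
    have : ∀ i : Fin k, (∑ u ∈ S i, f u) = ∑ u ∈ U, if u ∈ S i then f u else 0 := by
      intro i; rw [← Finset.sum_filter, hfilter]
    rw [Finset.sum_congr rfl fun i _ => this i, Finset.sum_comm]
    refine Finset.sum_congr rfl fun u _ => ?_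
    rw [← Finset.sum_filter, Finset.sum_const, smul_eq_mul, hc]
  have hcard : (∑ i, (S i).card) = ∑ u ∈ U, c u := by
    have := htrans 1
    simpa using this
  have hval : (∑ i, ∑ u ∈ S i, 2 ^ ι u) = ∑ u ∈ U, c u * 2 ^ ι u := htrans _
  constructor
  · rintro ⟨h1, h2⟩
    rw [hcard] at h1
    rw [hval] at h2
    -- fiberwise sums over range n
    set c' : ℕ → ℕ := fun j => ∑ u ∈ U.filter (fun u => ι u = j), c u with hc'
    have hfib1 : (∑ j ∈ range n, c' j) = ∑ u ∈ U, c u :=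
      Finset.sum_fiberwise_of_maps_to (fun u hu => Finset.mem_range.mpr (hιlt u hu)) c
    have hfib2 : (∑ j ∈ range n, c' j * 2 ^ j) = ∑ u ∈ U, c u * 2 ^ ι u := by
      rw [← Finset.sum_fiberwise_of_maps_to (fun u hu => Finset.mem_range.mpr (hιlt u hu))
        (fun u => c u * 2 ^ ι u)]
      refine Finset.sum_congr rfl fun j _ => ?_
      rw [hc', Finset.sum_mul]
      refine Finset.sum_congr rfl fun u hu => ?_
      rw [(Finset.mem_filter.mp hu).2]
    have hkey := key_lemma n c' (by rw [hfib2]; exact h2)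
    have hone : ∀ j < n, c' j = 1 := hkey.2 (by rw [hfib1]; exact h1)
    have hcu : ∀ u ∈ U, c u = 1 := by
      intro u hu
      have hsingle : U.filter (fun v => ι v = ι u) = {u} := by
        ext v
        simp only [Finset.mem_filter, Finset.mem_singleton]
        constructor
        · rintro ⟨hv, hvu⟩; exact hιinj v hv u hu hvu
        · rintro rfl; exact ⟨hu, rfl⟩
      have := hone (ι u) (hιlt u hu)
      simp only [hc'] at this
      rw [hsingle, Finset.sum_singleton] at this
      exact this
    constructor
    · intro i j hij
      rw [Finset.disjoint_left]
      intro u hui huj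
      have hu : u ∈ U := hsub i hui
      have h2le : ({i, j} : Finset (Fin k)) ⊆ Finset.univ.filter (fun i => u ∈ S i) := by
        intro x hx
        simp only [Finset.mem_insert, Finset.mem_singleton] at hx
        rcases hx with rfl | rfl <;> simp [hui, huj]
      have hge := Finset.card_le_card h2le
      rw [Finset.card_insert_of_notMem (by simpa using hij), Finset.card_singleton] at hge
      have heq : (Finset.univ.filter (fun i => u ∈ S i)).card = 1 := hcu u hu
      omega
    · ext u
      simp only [Finset.mem_biUnion, Finset.mem_univ, true_and]
      constructor
      · rintro ⟨i, hi⟩; exact hsub i hi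
      · intro hu
        have heq : (Finset.univ.filter (fun i => u ∈ S i)).card = 1 := hcu u hu
        have : (Finset.univ.filter (fun i => u ∈ S i)).Nonempty :=
          Finset.card_pos.mp (by omega)
        obtain ⟨i, hi⟩ := this
        exact ⟨i, (Finset.mem_filter.mp hi).2⟩
  · rintro ⟨hdisj, hcover⟩
    have hpd : ∀ i ∈ (Finset.univ : Finset (Fin k)), ∀ j ∈ Finset.univ, i ≠ j →
        Disjoint (S i) (S j) := fun i _ j _ hij => hdisj i j hij
    have himg : U.image ι = range n := by
      apply Finset.eq_of_subset_of_card_le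
      · intro j hj
        obtain ⟨u, hu, rfl⟩ := Finset.mem_image.mp hj
        exact Finset.mem_range.mpr (hιlt u hu)
      · rw [Finset.card_range, Finset.card_image_of_injOn (fun u hu v hv => hιinj u hu v hv), hU]
    have hUsum : (∑ u ∈ U, 2 ^ ι u) = 2 ^ n - 1 := by
      rw [← sum_two_pow n, ← himg,
        Finset.sum_image (fun u hu v hv => hιinj u hu v hv)]
    constructor
    · rw [← hU, ← hcover, Finset.card_biUnion hpd]
    · rw [← hUsum, ← hcover, Finset.sum_biUnion]
      exact fun i _ j _ hij => hdisj i j hij
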